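/- For every preference profile P and every alternative w ∈ A: w ∈ RV^PUT(P) if and only if w ∈ RV(σ(E(M(P)), E(T^RSP(w, sRV(P)))), P). Consequently, RV^PUT(P) = { w ∈ A : w ∈ RV(σ(E(M(P)), E(T^RSP(w, sRV(P)))), P) }. -/

import Mathlib

attribute [local instance] Classical.propDecidable

/-- A preference profile: each of `m` voters has a strict linear (total) preference
relation over the alternatives `A`. -/
structure Profile (A : Type*) (m : ℕ) where
  pref : Fin m → A → A → Prop
  strict : ∀ i, IsStrictTotalOrder A (pref i)

/-- The majority margin of `x` over `y`: the number of voters preferring `x` to `y`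
minus the number of voters preferring `y` to `x`. -/
noncomputable def margin {A : Type*} [Fintype A] {m : ℕ} (P : Profile A m) (x y : A) : ℤ :=
  ((Finset.univ.filter fun i => P.pref i x y).card : ℤ) -
    ((Finset.univ.filter fun i => P.pref i y x).card : ℤ)

/-- The majority margin as a function on (potential) edges. -/
noncomputable def marginE {A : Type*} [Fintype A] {m : ℕ} (P : Profile A m) : A × A → ℤ :=
  fun e => margin P e.1 e.2

/-- The edge set of the margin graph: an edge `(x, y)` between distinct alternatives
whenever the majority margin of `x` over `y` is nonnegative. -/
noncomputable def marginEdges {A : Type*} [Fintype A] {m : ℕ} (P : Profile A m) :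
    Finset (A × A) :=
  Finset.univ.filter fun e => e.1 ≠ e.2 ∧ 0 ≤ margin P e.1 e.2

/-- `l` is a path from `x` to `y` in the digraph with edge set `E`:
a nonempty list of pairwise distinct vertices starting at `x`, ending at `y`,
whose consecutive vertices are joined by edges of `E`. -/
def IsPathFrom {V : Type*} (E : Finset (V × V)) (l : List V) (x y : V) : Prop :=
  l ≠ [] ∧ l.Nodup ∧ l.head? = some x ∧ l.getLast? = some y ∧
    l.Chain' fun a b => (a, b) ∈ E

/-- There is a path from `x` to `y` in the digraph with edge set `E`. -/
def Reach {V : Type*} (E : Finset (V × V)) (x y : V) : Prop :=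
  ∃ l, IsPathFrom E l x y

/-- The digraph with edge set `E` contains a directed cycle. -/
def HasCycle {V : Type*} (E : Finset (V × V)) : Prop :=
  ∃ f ∈ E, Reach E f.2 f.1

/-- `T` is a tree rooted at `r`: there is a unique path from `r` to every vertex,
no edge enters the root, and every vertex has at most one incoming edge. -/
def IsRootedTree {V : Type*} (T : Finset (V × V)) (r : V) : Prop :=
  (∀ v : V, ∃! l : List V, IsPathFrom T l r v) ∧ (∀ e ∈ T, e.2 ≠ r) ∧
    ∀ e f, e ∈ T → f ∈ T → e.2 = f.2 → e = f

/-- `a` has no incoming edge in `D`. -/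
def noIncoming {V : Type*} (D : Finset (V × V)) (a : V) : Prop :=
  ∀ e ∈ D, e.2 ≠ a

/-- `o` is a descending linear ordering of the edge set `E` with respect to the
margin function `marg`: an enumeration of `E` without repetition in which edges of
larger margin come before edges of smaller margin. -/
def IsDescOrdering {V : Type*} (marg : V × V → ℤ) (E : Finset (V × V))
    (o : List (V × V)) : Prop :=
  o.Nodup ∧ (∀ e, e ∈ o ↔ e ∈ E) ∧ o.Pairwise fun e f => marg f ≤ marg e

/-- One step of the River procedure: add `e = (x, y)` to the current diagram `D` unless
(R1) `y` already has an incoming edge in `D`, or (R2) there is a path from `y` to `x`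
in `D`. -/
noncomputable def riverStep {V : Type*} (D : Finset (V × V)) (e : V × V) :
    Finset (V × V) :=
  if (∃ f ∈ D, f.2 = e.2) ∨ Reach D e.2 e.1 then D else insert e D

/-- The River diagram obtained by processing the edges in the order `o`,
starting from the empty diagram. -/
noncomputable def riverFold {V : Type*} (o : List (V × V)) : Finset (V × V) :=
  o.foldl riverStep ∅

/-- One step of the semi-River process with margin function `marg`: add `e = (x, y)` to
the current diagram `D` unless
(sR1) there is another incoming edge `e' = (z, y)` of `y` among the included edges of
margin strictly greater than `marg e` such that there is no path from `y` to `z` among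
the included edges of margin at least `marg e'`, or
(sR2) within the included edges of strictly greater margin, the set of vertices having
a path to `x` avoiding all incoming edges of `y` induces an acyclic subgraph in which
`y` is the only vertex with no incoming edge. -/
noncomputable def semiRiverStep {V : Type*} (marg : V × V → ℤ) (D : Finset (V × V))
    (e : V × V) : Finset (V × V) :=
  let Sgt := D.filter fun f => marg e < marg f
  let sR1 : Prop := ∃ f ∈ Sgt, f.2 = e.2 ∧
      ¬ Reach (D.filter fun g => marg f ≤ marg g) e.2 f.1
  let Anc : Set V := {v | Reach (Sgt.filter fun g => g.2 ≠ e.2) v e.1}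
  let ind := Sgt.filter fun g => g.1 ∈ Anc ∧ g.2 ∈ Anc
  let sR2 : Prop := e.2 ∈ Anc ∧ ¬ HasCycle ind ∧
      ∀ v ∈ Anc, ((∀ g ∈ ind, g.2 ≠ v) ↔ v = e.2)
  if sR1 ∨ sR2 then D else insert e D

/-- The semi-River diagram obtained by processing the edges in the order `o`,
starting from the empty diagram. -/
noncomputable def semiRiverFold {V : Type*} (marg : V × V → ℤ) (o : List (V × V)) :
    Finset (V × V) :=
  o.foldl (semiRiverStep marg) ∅

/-- The runs of the directed Prim algorithm on the digraph with edge set `E`, weight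
function `w`, and start vertex `s`: `PrimRun E w s S T` holds if after some number of
steps the set of explored vertices is `S` and the collected tree edges are `T`; at each
step an arbitrary crossing edge of maximum weight is selected. -/
inductive PrimRun {V : Type*} {β : Type*} [LinearOrder β] (E : Finset (V × V))
    (w : V × V → β) (s : V) : Finset V → Finset (V × V) → Prop
  | init : PrimRun E w s {s} ∅
  | step {S : Finset V} {T : Finset (V × V)} (e : V × V) (he : e ∈ E)
      (h1 : e.1 ∈ S) (h2 : e.2 ∉ S)
      (hmax : ∀ f ∈ E, f.1 ∈ S → f.2 ∉ S → w f ≤ w e)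
      (hrun : PrimRun E w s S T) :
      PrimRun E w s (insert e.2 S) (insert e T)

/-- `T` is a possible output of the directed Prim algorithm on `(E, w)` started at `s`:
it is obtained by a run that has terminated, i.e. no crossing edge remains. -/
def IsPrimOutput {V : Type*} {β : Type*} [LinearOrder β] (E : Finset (V × V))
    (w : V × V → β) (s : V) (T : Finset (V × V)) : Prop :=
  ∃ S : Finset V, PrimRun E w s S T ∧ ∀ f ∈ E, f.1 ∈ S → f.2 ∈ S

/-- The strength of a path (as a list of vertices): the minimum weight of its edges,
`⊤` for a trivial path with no edges. -/
noncomputable def strength {V : Type*} (w : V × V → ℕ) (l : List V) : ℕ∞ :=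
  ((l.zip l.tail).map fun p => (w p : ℕ∞)).foldr min ⊤

/-- `l` is a strongest path from `x` to `y`: it is a path from `x` to `y` and no path
from `x` to `y` has (strictly) greater strength. -/
def IsStrongestPath {V : Type*} (E : Finset (V × V)) (w : V × V → ℕ) (l : List V)
    (x y : V) : Prop :=
  IsPathFrom E l x y ∧ ∀ l', IsPathFrom E l' x y → strength w l' ≤ strength w l

/-- `o` is a descending linear ordering of `E` in which, among edges of equal margin,
edges belonging to `E'` come before edges not belonging to `E'`. -/
def IsSetOrdering {V : Type*} (marg : V × V → ℤ) (E E' : Finset (V × V))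
    (o : List (V × V)) : Prop :=
  o.Nodup ∧ (∀ e, e ∈ o ↔ e ∈ E) ∧
    o.Pairwise fun e f => marg f ≤ marg e ∧ (marg e = marg f → f ∈ E' → e ∈ E')


/-! ### Auxiliary infrastructure: reachability -/

section ReachInfra

variable {V : Type*}

/-- Reachability as reflexive-transitive closure of the edge relation. -/
def Rch (E : Finset (V × V)) : V → V → Prop :=
  Relation.ReflTransGen (fun a b => (a, b) ∈ E)

lemma rch_of_chain (E : Finset (V × V)) :
    ∀ (l : List V) (a b : V), l.head? = some a → l.getLast? = some b →
      l.Chain' (fun p q => (p, q) ∈ E) → Rch E a b := by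
  intro l
  induction l with
  | nil => intro a b h; simp at h
  | cons x t ih =>
    intro a b ha hb hc
    simp only [List.head?_cons, Option.some.injEq] at ha
    subst ha
    cases t with
    | nil =>
      simp only [List.getLast?_singleton, Option.some.injEq] at hb
      subst hb; exact Relation.ReflTransGen.refl
    | cons y t' =>
      simp only [List.Chain', List.isChain_cons_cons] at hc
      have h1 : Rch E y b := ih y b rfl (by simpa using hb) hc.2
      exact Relation.ReflTransGen.head hc.1 h1

lemma walk_to_path (E : Finset (V × V)) :
    ∀ (n : ℕ) (l : List V) (a b : V), l.length ≤ n → l ≠ [] →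
      l.head? = some a → l.getLast? = some b →
      l.Chain' (fun p q => (p, q) ∈ E) →
      ∃ l', l' ≠ [] ∧ l'.Nodup ∧ l'.head? = some a ∧ l'.getLast? = some b ∧
        l'.Chain' (fun p q => (p, q) ∈ E) ∧ ∀ v ∈ l', v ∈ l := by
  intro n
  induction n with
  | zero =>
    intro l a b hl hne
    have : l.length = 0 := Nat.le_zero.mp hl
    rw [List.length_eq_zero_iff] at this; exact absurd this hne
  | succ n ih =>
    intro l a b hl hne ha hb hc
    match l, hne with
    | x :: t, _ =>
      simp only [List.head?_cons, Option.some.injEq] at ha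
      subst ha
      by_cases hxt : x ∈ t
      · obtain ⟨t₁, t₂, rfl⟩ := List.append_of_mem hxt
        have hsuf : (x :: t₂) <:+ (x :: (t₁ ++ x :: t₂)) :=
          ⟨x :: t₁, by simp⟩
        have hlast : (x :: t₂).getLast? = some b := by
          have := List.getLast?_append_cons (x :: t₁) x t₂
          rw [show x :: (t₁ ++ x :: t₂) = (x :: t₁) ++ x :: t₂ by simp] at hb
          rw [this] at hb; exact hb
        have hch : (x :: t₂).Chain' (fun p q => (p, q) ∈ E) := hc.suffix hsuf
        have hlen : (x :: t₂).length ≤ n := by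
          have := hl; simp [List.length_append] at this ⊢; omega
        obtain ⟨l', h1, h2, h3, h4, h5, h6⟩ :=
          ih (x :: t₂) x b hlen (by simp) rfl hlast hch
        exact ⟨l', h1, h2, h3, h4, h5, fun v hv => by
          have := h6 v hv
          simp only [List.mem_cons, List.mem_append] at this ⊢
          tauto⟩
      · cases t with
        | nil =>
          exact ⟨[x], by simp, by simp, rfl, hb, List.isChain_singleton _, by simp⟩
        | cons y t' =>
          simp only [List.Chain', List.isChain_cons_cons] at hc
          have hlast : (y :: t').getLast? = some b := by simpa using hb
          have hlen : (y :: t').length ≤ n := by simp at hl ⊢; omega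
          obtain ⟨l', h1, h2, h3, h4, h5, h6⟩ :=
            ih (y :: t') y b hlen (by simp) rfl hlast hc.2
          refine ⟨x :: l', by simp, ?_, rfl, ?_, ?_, ?_⟩
          · refine List.nodup_cons.mpr ⟨fun hx => hxt ?_, h2⟩
            have := h6 x hx; simpa using this
          · cases l' with
            | nil => exact absurd rfl h1
            | cons z l'' => simpa using h4
          · cases l' with
            | nil => exact absurd rfl h1
            | cons z l'' =>
              simp only [List.Chain', List.isChain_cons_cons]
              refine ⟨?_, h5⟩
              have : z = y := by simpa using h3
              rw [this]; exact hc.1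
          · intro v hv
            simp only [List.mem_cons] at hv ⊢
            rcases hv with rfl | hv
            · exact Or.inl rfl
            · exact Or.inr (by have := h6 v hv; simpa using this)

lemma reach_iff_rch (E : Finset (V × V)) (x y : V) :
    Reach E x y ↔ Rch E x y := by
  constructor
  · rintro ⟨l, hne, _, ha, hb, hc⟩
    exact rch_of_chain E l x y ha hb hc
  · intro h
    induction h with
    | refl => exact ⟨[x], by simp, by simp, rfl, by simp, List.isChain_singleton _⟩
    | tail hab hbc ihab =>
      rename_i b' c'
      obtain ⟨l, hne, hnd, ha, hb, hc⟩ := ihab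
      have hwalk : (l ++ [c']).head? = some x := by
        cases l with
        | nil => exact absurd rfl hne
        | cons z t => simpa using ha
      have hlast : (l ++ [c']).getLast? = some c' := by
        simp [List.getLast?_concat]
      have hch : (l ++ [c']).Chain' (fun p q => (p, q) ∈ E) := by
        simp only [List.Chain']; rw [List.isChain_append]
        exact ⟨hc, List.isChain_singleton _, fun p hp q hq => by
          simp only [List.head?_cons, Option.mem_def, Option.some.injEq] at hq
          subst hq
          rw [Option.mem_def, hb] at hp
          have hpb : b' = p := by injection hp
          subst hpb; exact hbc⟩
      obtain ⟨l', h1, h2, h3, h4, h5, _⟩ :=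
        walk_to_path E (l ++ [c']).length (l ++ [c']) x c' le_rfl (by simp [hne])
          hwalk hlast hch
      exact ⟨l', h1, h2, h3, h4, h5⟩

lemma rch_mono {E F : Finset (V × V)} (h : E ⊆ F) {x y : V} (hr : Rch E x y) :
    Rch F x y :=
  Relation.ReflTransGen.mono (fun _ _ hab => h hab) _ _ hr

lemma rch_single {E : Finset (V × V)} {x y : V} (h : (x, y) ∈ E) : Rch E x y :=
  Relation.ReflTransGen.single h

/-- If there is a nontrivial reach into `b`, some edge enters `b`. -/
lemma rch_into {E : Finset (V × V)} {q b : V} (h : Rch E q b) (hne : q ≠ b) :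
    ∃ f ∈ E, f.2 = b := by
  rcases Relation.ReflTransGen.cases_tail h with h' | ⟨c, _, hcb⟩
  · exact absurd h'.symm hne
  · exact ⟨(c, b), hcb, rfl⟩

/-- Comparability along in-degree-one diagrams: two vertices reaching a common
target are comparable. -/
lemma rch_comparable {D : Finset (V × V)}
    (hdeg : ∀ e ∈ D, ∀ f ∈ D, e.2 = f.2 → e = f) :
    ∀ {a c : V}, Rch D a c → ∀ b, Rch D b c → Rch D a b ∨ Rch D b a := by
  intro a c ha
  induction ha with
  | refl => intro b hb; exact Or.inr hb
  | @tail m c' h₁ h₂ ih =>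
    intro b hb
    rcases Relation.ReflTransGen.cases_tail hb with rfl | ⟨m', hbm', hm'c⟩
    · exact Or.inl (h₁.tail h₂)
    · have : (m', c') = (m, c') := hdeg _ hm'c _ h₂ rfl
      have hm : m' = m := by injection this
      subst hm
      exact ih b hbm'

/-- A reach from inside `S` to outside `S` crosses the boundary. -/
lemma rch_exits {E : Finset (V × V)} {S : Finset V} :
    ∀ {a b : V}, Rch E a b → a ∈ S → b ∉ S →
      ∃ f ∈ E, f.1 ∈ S ∧ f.2 ∉ S := by
  intro a b h
  induction h using Relation.ReflTransGen.head_induction_on with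
  | refl => intro h1 h2; exact absurd h1 h2
  | head hac hcb ih =>
    rename_i a' c'
    intro haS hbS
    by_cases hcS : c' ∈ S
    · exact ih hcS hbS
    · exact ⟨(a', c'), hac, haS, hcS⟩

/-- Reach closure of a closed vertex set. -/
lemma rch_closed {E : Finset (V × V)} {S : Finset V}
    (hcl : ∀ f ∈ E, f.1 ∈ S → f.2 ∈ S) :
    ∀ {a b : V}, Rch E a b → a ∈ S → b ∈ S := by
  intro a b h
  induction h with
  | refl => exact id
  | tail _ h₂ ih => exact fun haS => hcl _ h₂ (ih haS)

end ReachInfra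

/-! ### Fold infrastructure -/

section FoldInfra

variable {V : Type*}

/-- Generic monotonicity for folds whose step either keeps or inserts. -/
lemma foldl_step_mono (step : Finset (V × V) → V × V → Finset (V × V))
    (hstep : ∀ D e, D ⊆ step D e) :
    ∀ (l : List (V × V)) (D : Finset (V × V)), D ⊆ l.foldl step D := by
  intro l
  induction l with
  | nil => intro D; simp
  | cons e t ih => intro D; exact (hstep D e).trans (ih (step D e))

lemma mem_foldl_step (step : Finset (V × V) → V × V → Finset (V × V))
    (hstep : ∀ D e, step D e ⊆ insert e D) :
    ∀ (l : List (V × V)) (D : Finset (V × V)) (f : V × V),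
      f ∈ l.foldl step D → f ∈ D ∨ f ∈ l := by
  intro l
  induction l with
  | nil => intro D f hf; exact Or.inl (by simpa using hf)
  | cons e t ih =>
    intro D f hf
    rcases ih (step D e) f hf with h | h
    · rcases Finset.mem_insert.mp (hstep D e h) with rfl | h'
      · exact Or.inr List.mem_cons_self
      · exact Or.inl h'
    · exact Or.inr (List.mem_cons_of_mem _ h)

lemma riverStep_mono {D : Finset (V × V)} {e : V × V} : D ⊆ riverStep D e := by
  unfold riverStep; split_ifs <;> simp [Finset.subset_insert]

lemma riverStep_sub {D : Finset (V × V)} {e : V × V} : riverStep D e ⊆ insert e D := by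
  unfold riverStep; split_ifs
  · exact Finset.subset_insert _ _
  · exact Finset.Subset.refl _

lemma semiRiverStep_mono {μ : V × V → ℤ} {D : Finset (V × V)} {e : V × V} :
    D ⊆ semiRiverStep μ D e := by
  simp only [semiRiverStep]; split_ifs <;> simp [Finset.subset_insert]

lemma semiRiverStep_sub {μ : V × V → ℤ} {D : Finset (V × V)} {e : V × V} :
    semiRiverStep μ D e ⊆ insert e D := by
  simp only [semiRiverStep]; split_ifs
  · exact Finset.subset_insert _ _
  · exact Finset.Subset.refl _

lemma riverFold_append (l₁ l₂ : List (V × V)) (e : V × V) :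
    riverFold (l₁ ++ e :: l₂) = l₂.foldl riverStep (riverStep (riverFold l₁) e) := by
  simp [riverFold, List.foldl_append]

lemma semiRiverFold_append (μ : V × V → ℤ) (l₁ l₂ : List (V × V)) (e : V × V) :
    semiRiverFold μ (l₁ ++ e :: l₂) =
      l₂.foldl (semiRiverStep μ) (semiRiverStep μ (semiRiverFold μ l₁) e) := by
  simp [semiRiverFold, List.foldl_append]

/-- Splitting facts for nodup lists. -/
lemma split_facts {l l₁ l₂ : List (V × V)} {e : V × V} (hnd : l.Nodup)
    (hsplit : l = l₁ ++ e :: l₂) : e ∉ l₁ ∧ e ∉ l₂ := by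
  subst hsplit
  rw [List.nodup_append] at hnd
  obtain ⟨-, hnd₂, hdisj⟩ := hnd
  exact ⟨fun h => hdisj _ h _ List.mem_cons_self rfl, (List.nodup_cons.mp hnd₂).1⟩

lemma pairwise_split {R : V × V → V × V → Prop} {l l₁ l₂ : List (V × V)} {e : V × V}
    (hpw : l.Pairwise R) (hsplit : l = l₁ ++ e :: l₂) :
    (∀ x ∈ l₁, R x e) ∧ (∀ y ∈ l₂, R e y) := by
  subst hsplit
  rw [List.pairwise_append] at hpw
  obtain ⟨-, hpw₂, hcross⟩ := hpw
  exact ⟨fun x hx => hcross x hx e List.mem_cons_self,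
    (List.pairwise_cons.mp hpw₂).1⟩

end FoldInfra

/-! ### River fold lemmas over descending orderings -/

section RiverLemmas

variable {V : Type*} {μ : V × V → ℤ} {E : Finset (V × V)}

lemma riverFold_mono_prefix (l₁ l₂ : List (V × V)) (e : V × V) :
    riverFold l₁ ⊆ riverFold (l₁ ++ e :: l₂) := by
  rw [riverFold_append]
  exact (riverStep_mono).trans
    (foldl_step_mono _ (fun D f => riverStep_mono) l₂ _)

lemma mem_riverFold_mem (l : List (V × V)) (f : V × V) (hf : f ∈ riverFold l) :
    f ∈ l := by
  rcases mem_foldl_step _ (fun D e => riverStep_sub) l ∅ f hf with h | h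
  · simp at h
  · exact h

lemma mem_semiRiverFold_mem (l : List (V × V)) (f : V × V)
    (hf : f ∈ semiRiverFold μ l) : f ∈ l := by
  rcases mem_foldl_step _ (fun D e => semiRiverStep_sub) l ∅ f hf with h | h
  · simp at h
  · exact h

/-- The guard of the river step. -/
def RGuard (D : Finset (V × V)) (e : V × V) : Prop :=
  (∃ f ∈ D, f.2 = e.2) ∨ Reach D e.2 e.1

lemma riverStep_eq (D : Finset (V × V)) (e : V × V) :
    riverStep D e = if RGuard D e then D else insert e D := by
  unfold riverStep RGuard; congr

/-- Processing an edge: it ends up in the final diagram iff the guard fails at its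
own step. -/
lemma mem_riverFold_iff_of_split {l l₁ l₂ : List (V × V)} {e : V × V}
    (hnd : l.Nodup) (hsplit : l = l₁ ++ e :: l₂) :
    e ∈ riverFold l ↔ ¬ RGuard (riverFold l₁) e := by
  obtain ⟨hel₁, hel₂⟩ := split_facts hnd hsplit
  have heD₁ : e ∉ riverFold l₁ := fun h => hel₁ (mem_riverFold_mem _ _ h)
  subst hsplit
  rw [riverFold_append, riverStep_eq]
  constructor
  · intro h
    intro hguard
    rw [if_pos hguard] at h
    rcases mem_foldl_step _ (fun D f => riverStep_sub) l₂ _ e h with h' | h'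
    · exact heD₁ h'
    · exact hel₂ h'
  · intro h
    rw [if_neg h]
    exact foldl_step_mono _ (fun D f => riverStep_mono) l₂ _ (Finset.mem_insert_self _ _)

/-- Edges in the prefix diagram have margin at least that of the split edge. -/
lemma riverFold_prefix_margin {l l₁ l₂ : List (V × V)} {e : V × V}
    (hpw : l.Pairwise fun a b => μ b ≤ μ a) (hsplit : l = l₁ ++ e :: l₂) :
    ∀ f ∈ riverFold l₁, μ e ≤ μ f := by
  intro f hf
  exact (pairwise_split hpw hsplit).1 f (mem_riverFold_mem _ _ hf)

/-- Strictly stronger edges: final membership equals prefix membership. -/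
lemma riverFold_strict_above {l l₁ l₂ : List (V × V)} {e : V × V}
    (hnd : l.Nodup) (hpw : l.Pairwise fun a b => μ b ≤ μ a)
    (hsplit : l = l₁ ++ e :: l₂) :
    ∀ f, μ e < μ f → (f ∈ riverFold l ↔ f ∈ riverFold l₁) := by
  intro f hμ
  constructor
  · intro hf
    have hfl : f ∈ l := mem_riverFold_mem _ _ hf
    have hfl₁ : f ∈ l₁ := by
      subst hsplit
      rcases List.mem_append.mp hfl with h | h
      · exact h
      · rcases List.mem_cons.mp h with rfl | h'
        · exact absurd hμ (lt_irrefl _)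
        · exact absurd ((pairwise_split hpw rfl).2 f h') (by omega)
    subst hsplit
    rw [riverFold_append] at hf
    rcases mem_foldl_step _ (fun D g => riverStep_sub) l₂ _ f hf with h | h
    · rcases Finset.mem_insert.mp (riverStep_sub h) with rfl | h'
      · exact absurd hμ (lt_irrefl _)
      · exact h'
    · exact absurd h (by
        rw [List.nodup_append] at hnd
        exact fun hh => hnd.2.2 _ hfl₁ _ (List.mem_cons_of_mem _ hh) rfl)
  · intro hf
    subst hsplit
    exact riverFold_mono_prefix _ _ _ hf

/-- In-degree at most one in river diagrams. -/
lemma riverFold_indeg (l : List (V × V)) :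
    ∀ e ∈ riverFold l, ∀ f ∈ riverFold l, e.2 = f.2 → e = f := by
  have key : ∀ (t : List (V × V)) (D : Finset (V × V)),
      (∀ e ∈ D, ∀ f ∈ D, e.2 = f.2 → e = f) →
      ∀ e ∈ t.foldl riverStep D, ∀ f ∈ t.foldl riverStep D, e.2 = f.2 → e = f := by
    intro t
    induction t with
    | nil => intro D hD; simpa using hD
    | cons g t' ih =>
      intro D hD
      refine ih (riverStep D g) ?_
      rw [riverStep_eq]
      split_ifs with hguard
      · exact hD
      · intro e he f hf hef
        rw [RGuard, not_or] at hguard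
        rcases Finset.mem_insert.mp he with rfl | he' <;>
          rcases Finset.mem_insert.mp hf with rfl | hf'
        · rfl
        · exact absurd ⟨f, hf', hef.symm⟩ hguard.1
        · exact absurd ⟨e, he', hef⟩ hguard.1
        · exact hD e he' f hf' hef
  exact key l ∅ (by simp)

/-- river fold prefixes (by take) are monotone. -/
lemma riverFold_take_mono (l : List (V × V)) {m m' : ℕ} (h : m ≤ m') :
    riverFold (l.take m) ⊆ riverFold (l.take m') := by
  have : l.take m' = l.take m ++ (l.drop m).take (m' - m) := by
    rw [← List.take_add]
    congr 1
    omega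
  rw [this]
  show riverFold _ ⊆ riverFold _
  rw [riverFold, riverFold, List.foldl_append]
  exact foldl_step_mono _ (fun D f => riverStep_mono) _ _

end RiverLemmas

/-! ### Semi-river fold: fixpoint characterization -/

section SemiRiver

variable {V : Type*}

/-- Condition (sR1) relative to a diagram `D`. -/
def SR1 (μ : V × V → ℤ) (D : Finset (V × V)) (e : V × V) : Prop :=
  ∃ f ∈ D.filter fun f => μ e < μ f, f.2 = e.2 ∧
    ¬ Reach (D.filter fun g => μ f ≤ μ g) e.2 f.1

/-- The ancestor set used in (sR2). -/
def AncSet (μ : V × V → ℤ) (D : Finset (V × V)) (e : V × V) : Set V :=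
  {v | Reach ((D.filter fun f => μ e < μ f).filter fun g => g.2 ≠ e.2) v e.1}

/-- The induced subgraph used in (sR2). -/
noncomputable def IndSet (μ : V × V → ℤ) (D : Finset (V × V)) (e : V × V) :
    Finset (V × V) :=
  (D.filter fun f => μ e < μ f).filter fun g =>
    g.1 ∈ AncSet μ D e ∧ g.2 ∈ AncSet μ D e

/-- Condition (sR2) relative to a diagram `D`. -/
def SR2 (μ : V × V → ℤ) (D : Finset (V × V)) (e : V × V) : Prop :=
  e.2 ∈ AncSet μ D e ∧ ¬ HasCycle (IndSet μ D e) ∧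
    ∀ v ∈ AncSet μ D e, ((∀ g ∈ IndSet μ D e, g.2 ≠ v) ↔ v = e.2)

lemma semiRiverStep_eq (μ : V × V → ℤ) (D : Finset (V × V)) (e : V × V) :
    semiRiverStep μ D e = if SR1 μ D e ∨ SR2 μ D e then D else insert e D := by
  simp only [semiRiverStep, SR1, SR2, AncSet, IndSet]; congr

lemma SR1_congr {μ : V × V → ℤ} {D D' : Finset (V × V)} {e : V × V}
    (h1 : (D.filter fun f => μ e < μ f) = D'.filter fun f => μ e < μ f)
    (h2 : ∀ f : V × V, μ e < μ f →
      (D.filter fun g => μ f ≤ μ g) = D'.filter fun g => μ f ≤ μ g) :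
    SR1 μ D e ↔ SR1 μ D' e := by
  unfold SR1
  constructor
  · rintro ⟨f, hf, hfe, hr⟩
    have hμ : μ e < μ f := (Finset.mem_filter.mp hf).2
    exact ⟨f, by rw [← h1]; exact hf, hfe, by rw [← h2 f hμ]; exact hr⟩
  · rintro ⟨f, hf, hfe, hr⟩
    have hμ : μ e < μ f := (Finset.mem_filter.mp hf).2
    exact ⟨f, by rw [h1]; exact hf, hfe, by rw [h2 f hμ]; exact hr⟩

lemma SR2_congr {μ : V × V → ℤ} {D D' : Finset (V × V)} {e : V × V}
    (h1 : (D.filter fun f => μ e < μ f) = D'.filter fun f => μ e < μ f) :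
    SR2 μ D e ↔ SR2 μ D' e := by
  have hAnc : AncSet μ D e = AncSet μ D' e := by unfold AncSet; rw [h1]
  have hInd : IndSet μ D e = IndSet μ D' e := by unfold IndSet; rw [h1, hAnc]
  unfold SR2; rw [hAnc, hInd]

/-- The fixpoint characterization of membership in the semi-River diagram. -/
lemma mem_semiRiverFold_iff {μ : V × V → ℤ} {E : Finset (V × V)} {o : List (V × V)}
    (ho : IsDescOrdering μ E o) (e : V × V) :
    e ∈ semiRiverFold μ o ↔
      e ∈ E ∧ ¬ SR1 μ (semiRiverFold μ o) e ∧ ¬ SR2 μ (semiRiverFold μ o) e := by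
  obtain ⟨hnd, hmem, hpw⟩ := ho
  set N := semiRiverFold μ o with hN
  -- helper: strict-above membership transfer, for any split
  have strict : ∀ (l₁ l₂ : List (V × V)), o = l₁ ++ e :: l₂ →
      ∀ f, μ e < μ f → (f ∈ N ↔ f ∈ semiRiverFold μ l₁) := by
    intro l₁ l₂ hsplit f hμ
    constructor
    · intro hf
      have hfl : f ∈ o := mem_semiRiverFold_mem _ _ hf
      have hfl₁ : f ∈ l₁ := by
        rw [hsplit] at hfl
        rcases List.mem_append.mp hfl with h | h
        · exact h
        · rcases List.mem_cons.mp h with rfl | h'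
          · exact absurd hμ (lt_irrefl _)
          · exact absurd ((pairwise_split hpw hsplit).2 f h') (by omega)
      rw [hN, hsplit, semiRiverFold_append] at hf
      rcases mem_foldl_step _ (fun D g => semiRiverStep_sub) l₂ _ f hf with h | h
      · rcases Finset.mem_insert.mp (semiRiverStep_sub h) with rfl | h'
        · exact absurd hμ (lt_irrefl _)
        · exact h'
      · rw [hsplit, List.nodup_append] at hnd
        exact absurd h (fun hh => hnd.2.2 _ hfl₁ _ (List.mem_cons_of_mem _ hh) rfl)
    · intro hf
      rw [hN, hsplit, semiRiverFold_append]
      exact foldl_step_mono _ (fun D g => semiRiverStep_mono) l₂ _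
        (semiRiverStep_mono hf)
  constructor
  · intro he
    have heo : e ∈ o := mem_semiRiverFold_mem _ _ he
    have heE : e ∈ E := (hmem e).mp heo
    obtain ⟨l₁, l₂, hsplit⟩ := List.append_of_mem heo
    set D₁ := semiRiverFold μ l₁ with hD₁
    have h1 : (D₁.filter fun f => μ e < μ f) = N.filter fun f => μ e < μ f := by
      ext f
      simp only [Finset.mem_filter]
      constructor
      · rintro ⟨hf, hμ⟩; exact ⟨(strict l₁ l₂ hsplit f hμ).mpr hf, hμ⟩
      · rintro ⟨hf, hμ⟩; exact ⟨(strict l₁ l₂ hsplit f hμ).mp hf, hμ⟩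
    have h2 : ∀ f : V × V, μ e < μ f →
        (D₁.filter fun g => μ f ≤ μ g) = N.filter fun g => μ f ≤ μ g := by
      intro f hμf
      ext g
      simp only [Finset.mem_filter]
      constructor
      · rintro ⟨hg, hμ⟩
        exact ⟨(strict l₁ l₂ hsplit g (lt_of_lt_of_le hμf hμ)).mpr hg, hμ⟩
      · rintro ⟨hg, hμ⟩
        exact ⟨(strict l₁ l₂ hsplit g (lt_of_lt_of_le hμf hμ)).mp hg, hμ⟩
    obtain ⟨hel₁, hel₂⟩ := split_facts hnd hsplit
    have heD₁ : e ∉ D₁ := fun h => hel₁ (mem_semiRiverFold_mem _ _ h)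
    have hcond : ¬ (SR1 μ D₁ e ∨ SR2 μ D₁ e) := by
      intro hcond
      have : semiRiverStep μ D₁ e = D₁ := by rw [semiRiverStep_eq, if_pos hcond]
      rw [hN, hsplit, semiRiverFold_append, ← hD₁, this] at he
      rcases mem_foldl_step _ (fun D g => semiRiverStep_sub) l₂ _ e he with h | h
      · exact heD₁ h
      · exact hel₂ h
    rw [not_or] at hcond
    exact ⟨heE, (SR1_congr h1 h2).not.mp hcond.1, (SR2_congr h1).not.mp hcond.2⟩
  · rintro ⟨heE, hs1, hs2⟩
    have heo : e ∈ o := (hmem e).mpr heE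
    obtain ⟨l₁, l₂, hsplit⟩ := List.append_of_mem heo
    set D₁ := semiRiverFold μ l₁ with hD₁
    have h1 : (D₁.filter fun f => μ e < μ f) = N.filter fun f => μ e < μ f := by
      ext f
      simp only [Finset.mem_filter]
      constructor
      · rintro ⟨hf, hμ⟩; exact ⟨(strict l₁ l₂ hsplit f hμ).mpr hf, hμ⟩
      · rintro ⟨hf, hμ⟩; exact ⟨(strict l₁ l₂ hsplit f hμ).mp hf, hμ⟩
    have h2 : ∀ f : V × V, μ e < μ f →
        (D₁.filter fun g => μ f ≤ μ g) = N.filter fun g => μ f ≤ μ g := by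
      intro f hμf
      ext g
      simp only [Finset.mem_filter]
      constructor
      · rintro ⟨hg, hμ⟩
        exact ⟨(strict l₁ l₂ hsplit g (lt_of_lt_of_le hμf hμ)).mpr hg, hμ⟩
      · rintro ⟨hg, hμ⟩
        exact ⟨(strict l₁ l₂ hsplit g (lt_of_lt_of_le hμf hμ)).mp hg, hμ⟩
    have hcond : ¬ (SR1 μ D₁ e ∨ SR2 μ D₁ e) := by
      rw [not_or]
      exact ⟨(SR1_congr h1 h2).not.mpr hs1, (SR2_congr h1).not.mpr hs2⟩
    rw [hN, hsplit, semiRiverFold_append, ← hD₁, semiRiverStep_eq, if_neg hcond]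
    exact foldl_step_mono _ (fun D g => semiRiverStep_mono) l₂ _
      (Finset.mem_insert_self _ _)

end SemiRiver

/-! ### Every river diagram is contained in the semi-river diagram -/

section ClaimB

variable {V : Type*} [Fintype V] {μ : V × V → ℤ} {E : Finset (V × V)}

lemma riverFold_subset_semiRiverFold {o ov : List (V × V)}
    (ho : IsDescOrdering μ E o) (hov : IsDescOrdering μ E ov) :
    ∀ e ∈ riverFold ov, e ∈ semiRiverFold μ o := by
  classical
  set N := semiRiverFold μ o with hNdef
  obtain ⟨hnd, hmem, hpw⟩ := hov
  suffices H : ∀ (k : ℕ) (e : V × V), (E.filter fun f => μ e < μ f).card = k →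
      e ∈ riverFold ov → e ∈ N by
    intro e he; exact H _ e rfl he
  intro k
  induction k using Nat.strong_induction_on with
  | _ k IH =>
  intro e hk he
  -- induction hypothesis in usable form
  have IH' : ∀ f : V × V, μ e < μ f → f ∈ riverFold ov → f ∈ N := by
    intro f hμf hf
    have hfE : f ∈ E := (hmem f).mp (mem_riverFold_mem _ _ hf)
    have hsub : (E.filter fun g => μ f < μ g) ⊂ (E.filter fun g => μ e < μ g) := by
      constructor
      · intro g hg
        rw [Finset.mem_filter] at hg ⊢
        exact ⟨hg.1, lt_trans hμf hg.2⟩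
      · intro hcon
        have : f ∈ E.filter fun g => μ f < μ g :=
          hcon (by rw [Finset.mem_filter]; exact ⟨hfE, hμf⟩)
        rw [Finset.mem_filter] at this
        exact absurd this.2 (lt_irrefl _)
    exact IH _ (hk ▸ Finset.card_lt_card hsub) f rfl hf
  have heE : e ∈ E := (hmem e).mp (mem_riverFold_mem _ _ he)
  obtain ⟨l₁, l₂, hsplit⟩ := List.append_of_mem (mem_riverFold_mem _ _ he)
  set D₁ := riverFold l₁ with hD₁def
  have hguard : ¬ RGuard D₁ e := (mem_riverFold_iff_of_split hnd hsplit).mp he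
  rw [RGuard, not_or] at hguard
  obtain ⟨hni, hnr⟩ := hguard
  have hD₁sub : D₁ ⊆ riverFold ov := by rw [hsplit]; exact riverFold_mono_prefix _ _ _
  have hD₁μ : ∀ f ∈ D₁, μ e ≤ μ f := riverFold_prefix_margin hpw hsplit
  have hD₁N : ∀ f ∈ D₁, μ e < μ f → f ∈ N := fun f hf hμ => IH' f hμ (hD₁sub hf)
  -- a general fact: a strictly stronger edge of N with head/tail facts that is not
  -- in D₁ was rejected at its own step, with prefix diagram inside D₁
  have reject : ∀ g : V × V, g ∈ N → μ e < μ g → g ∉ D₁ →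
      (∃ h ∈ D₁, μ g ≤ μ h ∧ h.2 = g.2) ∨
      (∃ Da : Finset (V × V), Da ⊆ D₁ ∧ (∀ f ∈ Da, μ g ≤ μ f) ∧ Reach Da g.2 g.1) := by
    intro g hgN hμg hgD₁
    have hgE : g ∈ E := (ho.2.1 g).mp (mem_semiRiverFold_mem _ _ hgN)
    have hgov : g ∈ ov := (hmem g).mpr hgE
    have hgl₁ : g ∈ l₁ := by
      rw [hsplit] at hgov
      rcases List.mem_append.mp hgov with h | h
      · exact h
      · rcases List.mem_cons.mp h with rfl | h'
        · exact absurd hμg (lt_irrefl _)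
        · exact absurd ((pairwise_split hpw hsplit).2 g h') (by omega)
    have hgRov : g ∉ riverFold ov := by
      intro hcon
      exact hgD₁ ((riverFold_strict_above hnd hpw hsplit g hμg).mp hcon)
    obtain ⟨a, b, hab⟩ := List.append_of_mem hgl₁
    have hsplit' : ov = a ++ g :: (b ++ e :: l₂) := by
      rw [hsplit, hab]; simp
    have hguard' : RGuard (riverFold a) g := by
      by_contra hcon
      exact hgRov ((mem_riverFold_iff_of_split hnd hsplit').mpr hcon)
    have haD₁ : riverFold a ⊆ D₁ := by
      rw [hD₁def, hab]; exact riverFold_mono_prefix _ _ _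
    have haμ : ∀ f ∈ riverFold a, μ g ≤ μ f := riverFold_prefix_margin hpw hsplit'
    rcases hguard' with ⟨h, hh, hh2⟩ | hr
    · exact Or.inl ⟨h, haD₁ hh, haμ h hh, hh2⟩
    · exact Or.inr ⟨riverFold a, haD₁, haμ, hr⟩
  refine (mem_semiRiverFold_iff ho e).mpr ⟨heE, ?_, ?_⟩
  · -- ¬ SR1
    rintro ⟨f, hfSgt, hf2, hfnr⟩
    rw [Finset.mem_filter] at hfSgt
    obtain ⟨hfN, hμf⟩ := hfSgt
    have hfD₁ : f ∉ D₁ := fun h => hni ⟨f, h, hf2⟩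
    rcases reject f hfN hμf hfD₁ with ⟨h, hh, hμh, hh2⟩ | ⟨Da, hDa, hDaμ, hr⟩
    · exact hni ⟨h, hh, by rw [hh2, hf2]⟩
    · refine hfnr ?_
      rw [reach_iff_rch] at hr ⊢
      rw [← hf2]
      refine rch_mono ?_ hr
      intro g hg
      rw [Finset.mem_filter]
      exact ⟨hD₁N g (hDa hg) (lt_of_lt_of_le hμf (hDaμ g hg)), hDaμ g hg⟩
  · -- ¬ SR2
    rintro ⟨hyAnc, hnocyc, hiff⟩
    -- notation
    have hAncR : ∀ v : V, v ∈ AncSet μ N e ↔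
        Rch ((N.filter fun f => μ e < μ f).filter fun g => g.2 ≠ e.2) v e.1 := by
      intro v; exact reach_iff_rch _ _ _
    -- STEP 1
    have step1 : ∀ v : V, v ∈ AncSet μ N e → v ≠ e.2 →
        ∃ g ∈ IndSet μ N e, g.2 = v ∧ g ∈ D₁ := by
      intro v hvAnc hvy
      have : ¬ ∀ g ∈ IndSet μ N e, g.2 ≠ v := by
        rw [hiff v hvAnc]; exact hvy
      push_neg at this
      obtain ⟨g, hgind, hg2⟩ := this
      by_cases hgD₁ : g ∈ D₁
      · exact ⟨g, hgind, hg2, hgD₁⟩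
      have hgSgt := (Finset.mem_filter.mp hgind).1
      have hgcond := (Finset.mem_filter.mp hgind).2
      rw [Finset.mem_filter] at hgSgt
      obtain ⟨hgN, hμg⟩ := hgSgt
      rcases reject g hgN hμg hgD₁ with ⟨h, hh, hμh, hh2⟩ | ⟨Da, hDa, hDaμ, hr⟩
      · -- the blocker h is itself an ind edge in D₁
        have hhN : h ∈ N := hD₁N h hh (lt_of_lt_of_le hμg hμh)
        have hh2v : h.2 = v := by rw [hh2, hg2]
        have hhy : h.2 ≠ e.2 := by rw [hh2v]; exact hvy
        have hhSgt' : h ∈ (N.filter fun f => μ e < μ f).filter fun g' => g'.2 ≠ e.2 := by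
          rw [Finset.mem_filter, Finset.mem_filter]
          exact ⟨⟨hhN, lt_of_lt_of_le hμg hμh⟩, hhy⟩
        have hh1Anc : h.1 ∈ AncSet μ N e := by
          rw [hAncR]
          have hv : Rch ((N.filter fun f => μ e < μ f).filter fun g' => g'.2 ≠ e.2)
              v e.1 := (hAncR v).mp hvAnc
          refine Relation.ReflTransGen.head (show ((h.1, v) : V × V) ∈ _ from ?_) hv
          rw [← hh2v, Prod.mk.eta]
          exact hhSgt' 
        refine ⟨h, ?_, hh2v, hh⟩
        rw [IndSet, Finset.mem_filter, Finset.mem_filter]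
        exact ⟨⟨hhN, lt_of_lt_of_le hμg hμh⟩, hh1Anc, by rw [hh2v]; exact hvAnc⟩
      · -- rejection by reach: produces a cycle in ind
        exfalso
        have hrch : Rch ((N.filter fun f => μ e < μ f).filter fun g' => g'.2 ≠ e.2)
            g.2 g.1 := by
          rw [reach_iff_rch] at hr
          refine rch_mono ?_ hr
          intro p hp
          rw [Finset.mem_filter, Finset.mem_filter]
          refine ⟨⟨hD₁N p (hDa hp) (lt_of_lt_of_le hμg (hDaμ p hp)),
            lt_of_lt_of_le hμg (hDaμ p hp)⟩, ?_⟩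
          intro hcon
          exact hni ⟨p, hDa hp, hcon⟩
        -- ancestors closure: the walk stays in Anc, so it is an ind walk
        have anc_closure : ∀ p q : V,
            Rch ((N.filter fun f => μ e < μ f).filter fun g' => g'.2 ≠ e.2) p q →
            q ∈ AncSet μ N e → Rch (IndSet μ N e) p q := by
          intro p q hpq
          induction hpq using Relation.ReflTransGen.head_induction_on with
          | refl => intro _; exact Relation.ReflTransGen.refl
          | head hedge htail ih =>
            rename_i p' m
            intro hq
            have hmAnc : m ∈ AncSet μ N e := by
              rw [hAncR]
              exact Relation.ReflTransGen.trans htail ((hAncR q).mp hq)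
            have hp'Anc : p' ∈ AncSet μ N e := by
              rw [hAncR]
              exact Relation.ReflTransGen.head hedge ((hAncR m).mp hmAnc)
            refine Relation.ReflTransGen.head ?_ (ih hq)
            rw [IndSet, Finset.mem_filter]
            exact ⟨(Finset.mem_filter.mp hedge).1, hp'Anc, hmAnc⟩
        have hcyc : Rch (IndSet μ N e) g.2 g.1 := by
          refine anc_closure _ _ hrch ?_
          exact (Finset.mem_filter.mp hgind).2.1
        exact hnocyc ⟨g, hgind, by rw [reach_iff_rch]; exact hcyc⟩
    -- STEP 2: walk backwards from e.1 to e.2 inside D₁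
    have step2 : ∀ (n : ℕ) (v : V),
        (Finset.univ.filter fun u => Rch (IndSet μ N e) u v).card = n →
        v ∈ AncSet μ N e → Rch D₁ e.2 v := by
      intro n
      induction n using Nat.strong_induction_on with
      | _ n IHn =>
      intro v hn hvAnc
      by_cases hvy : v = e.2
      · rw [hvy]; exact Relation.ReflTransGen.refl
      obtain ⟨g, hgind, hg2, hgD₁⟩ := step1 v hvAnc hvy
      have hg1Anc : g.1 ∈ AncSet μ N e := (Finset.mem_filter.mp hgind).2.1
      have hmeas : (Finset.univ.filter fun u => Rch (IndSet μ N e) u g.1).card <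
          (Finset.univ.filter fun u => Rch (IndSet μ N e) u v).card := by
        apply Finset.card_lt_card
        constructor
        · intro u hu
          rw [Finset.mem_filter] at hu ⊢
          refine ⟨Finset.mem_univ _, ?_⟩
          have : Rch (IndSet μ N e) g.1 v := by
            rw [← hg2]; exact rch_single hgind
          exact Relation.ReflTransGen.trans hu.2 this
        · intro hcon
          have hv : v ∈ Finset.univ.filter fun u => Rch (IndSet μ N e) u v := by
            rw [Finset.mem_filter]; exact ⟨Finset.mem_univ _, Relation.ReflTransGen.refl⟩
          have := hcon hv
          rw [Finset.mem_filter] at this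
          refine hnocyc ⟨g, hgind, ?_⟩
          rw [reach_iff_rch, hg2]
          exact this.2
        
      have hrec : Rch D₁ e.2 g.1 := IHn _ (hn ▸ hmeas) g.1 rfl hg1Anc
      have : Rch D₁ g.1 v := by rw [← hg2]; exact rch_single hgD₁
      exact Relation.ReflTransGen.trans hrec this
    have hx : e.1 ∈ AncSet μ N e := by
      rw [hAncR]; exact Relation.ReflTransGen.refl
    refine hnr ?_
    rw [reach_iff_rch]
    exact step2 _ e.1 rfl hx

end ClaimB


/-! ### Prim run lemmas -/

section PrimLemmas

variable {V : Type*} {μ : V × V → ℤ} {N : Finset (V × V)} {w : V}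

lemma prim_basic {S : Finset V} {T : Finset (V × V)} (h : PrimRun N μ w S T) :
    w ∈ S ∧ (∀ t ∈ T, t ∈ N ∧ t.1 ∈ S ∧ t.2 ∈ S ∧ t.2 ≠ w) ∧
      (∀ t ∈ T, ∀ t' ∈ T, t.2 = t'.2 → t = t') := by
  induction h with
  | init => exact ⟨Finset.mem_singleton_self _, by simp, by simp⟩
  | step e he h1 h2 hmax hrun ih =>
    obtain ⟨hw, hT, huniq⟩ := ih
    refine ⟨Finset.mem_insert_of_mem hw, ?_, ?_⟩
    · intro t ht
      rcases Finset.mem_insert.mp ht with rfl | ht'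
      · exact ⟨he, Finset.mem_insert_of_mem h1, Finset.mem_insert_self _ _,
          fun hc => h2 (hc ▸ hw)⟩
      · obtain ⟨ha, hb, hc, hd⟩ := hT t ht'
        exact ⟨ha, Finset.mem_insert_of_mem hb, Finset.mem_insert_of_mem hc, hd⟩
    · intro t ht t' ht' htt
      rcases Finset.mem_insert.mp ht with rfl | ht0 <;>
        rcases Finset.mem_insert.mp ht' with rfl | ht0'
      · rfl
      · exact absurd ((hT t' ht0').2.2.1) (by rw [← htt]; exact h2)
      · exact absurd ((hT t ht0).2.2.1) (by rw [htt]; exact h2)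
      · exact huniq t ht0 t' ht0' htt

/-- Claim C: the Prim tree realizes all bottleneck reachability from the root. -/
lemma prim_reach {S : Finset V} {T : Finset (V × V)} (hrun : PrimRun N μ w S T)
    (hcl : ∀ f ∈ N, f.1 ∈ S → f.2 ∈ S) (c : ℤ) :
    ∀ u : V, Rch (N.filter fun f => c ≤ μ f) w u →
      Rch (T.filter fun f => c ≤ μ f) w u := by
  have hTsub : ∀ (e : V × V) (T₀ : Finset (V × V)),
      (T₀.filter fun f => c ≤ μ f) ⊆ ((insert e T₀).filter fun f => c ≤ μ f) := by
    intro e T₀ f hf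
    rw [Finset.mem_filter] at hf ⊢
    exact ⟨Finset.mem_insert_of_mem hf.1, hf.2⟩
  have inv : ((∀ v : V, Rch (N.filter fun f => c ≤ μ f) w v →
          v ∈ S ∧ Rch (T.filter fun f => c ≤ μ f) w v) ∨
        (∀ v ∈ S, Rch (T.filter fun f => c ≤ μ f) w v)) := by
    clear hcl
    induction hrun with
    | init =>
      right
      intro v hv
      rw [Finset.mem_singleton] at hv
      subst hv
      exact Relation.ReflTransGen.refl
    | @step S₀ T₀ e he h1 h2 hmax hrun ih =>
      rcases ih with hL | hR
      · left
        intro v hv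
        obtain ⟨h1', h2'⟩ := hL v hv
        exact ⟨Finset.mem_insert_of_mem h1', rch_mono (hTsub _ _) h2'⟩
      · by_cases hUS : ∀ v : V, Rch (N.filter fun f => c ≤ μ f) w v → v ∈ S₀
        · left
          intro v hv
          exact ⟨Finset.mem_insert_of_mem (hUS v hv),
            rch_mono (hTsub _ _) (hR v (hUS v hv))⟩
        · push_neg at hUS
          obtain ⟨u', hu', hu'S⟩ := hUS
          have hwS : w ∈ S₀ := (prim_basic hrun).1
          obtain ⟨f, hf, hf1, hf2⟩ := rch_exits hu' hwS hu'S
          rw [Finset.mem_filter] at hf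
          have hμe : c ≤ μ e := le_trans hf.2 (hmax f hf.1 hf1 hf2)
          right
          intro v hv
          rcases Finset.mem_insert.mp hv with rfl | hvS
          · refine Relation.ReflTransGen.tail (rch_mono (hTsub _ _) (hR e.1 h1)) ?_
            rw [Finset.mem_filter]
            exact ⟨Finset.mem_insert_self _ _, hμe⟩
          · exact rch_mono (hTsub _ _) (hR v hvS)
  intro u hu
  rcases inv with hL | hR
  · exact (hL u hu).2
  · refine hR u ?_
    refine rch_closed (S := S) ?_ hu (prim_basic hrun).1
    intro f hf hf1
    exact hcl f (Finset.mem_filter.mp hf).1 hf1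

/-- The SUB lemma: kill paths for stronger in-edges of tree heads are realized
inside the Prim tree at full strength. -/
lemma prim_sub {S : Finset V} {T : Finset (V × V)} (hrun : PrimRun N μ w S T)
    (hcl : ∀ f ∈ N, f.1 ∈ S → f.2 ∈ S) (g : V × V) (hg : g ∈ N)
    (hκ : Rch (N.filter fun t => μ g ≤ μ t) g.2 g.1) :
    ∀ f ∈ T, f.2 = g.2 → μ f < μ g →
      Rch (T.filter fun t => μ g ≤ μ t) g.2 g.1 := by
  have hTsub : ∀ (e : V × V) (T₀ : Finset (V × V)),
      (T₀.filter fun t => μ g ≤ μ t) ⊆ ((insert e T₀).filter fun t => μ g ≤ μ t) := by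
    intro e T₀ f hf
    rw [Finset.mem_filter] at hf ⊢
    exact ⟨Finset.mem_insert_of_mem hf.1, hf.2⟩
  have inv : ((g.2 ∉ S ∧ ∀ t ∈ T, t.2 ≠ g.2) ∨
      Rch (T.filter fun t => μ g ≤ μ t) g.2 g.1 ∨
      (∃ t ∈ T, t.2 = g.2 ∧ μ g ≤ μ t) ∨
      (g.2 ∈ S ∧ ∀ v : V, Rch (N.filter fun t => μ g ≤ μ t) v g.1 → v ∈ S →
        Rch (T.filter fun t => μ g ≤ μ t) g.2 v)) := by
    clear hcl
    induction hrun with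
    | init =>
      by_cases hbw : g.2 = w
      · right; right; right
        refine ⟨by rw [hbw]; exact Finset.mem_singleton_self _, ?_⟩
        intro v hv hvS
        rw [Finset.mem_singleton] at hvS
        subst hvS
        rw [hbw]
        exact Relation.ReflTransGen.refl
      · left
        exact ⟨by rw [Finset.mem_singleton]; exact hbw, by simp⟩
    | @step S₀ T₀ e he h1 h2 hmax hrun ih =>
      rcases ih with ⟨hbS, hbT⟩ | hRch | ⟨t, ht, ht2, htμ⟩ | ⟨hbS, hreach⟩
      · -- b not yet in S
        by_cases hez : e.2 = g.2
        · by_cases hμe : μ g ≤ μ e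
          · right; right; left
            exact ⟨e, Finset.mem_insert_self _ _, hez, hμe⟩
          · push_neg at hμe
            have hzS : g.1 ∉ S₀ := by
              intro hzS
              have := hmax g hg hzS (hez ▸ h2)
              omega
            right; right; right
            refine ⟨by rw [← hez]; exact Finset.mem_insert_self _ _, ?_⟩
            intro v hv hvS
            rcases Finset.mem_insert.mp hvS with rfl | hvS₀
            · rw [hez]; exact Relation.ReflTransGen.refl
            · exfalso
              obtain ⟨f, hf, hf1, hf2⟩ := rch_exits hv hvS₀ hzS
              rw [Finset.mem_filter] at hf
              have := hmax f hf.1 hf1 hf2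
              omega
        · left
          refine ⟨?_, ?_⟩
          · rw [Finset.mem_insert]
            push_neg
            exact ⟨fun hc => hez hc.symm, hbS⟩
          · intro t ht
            rcases Finset.mem_insert.mp ht with rfl | ht'
            · exact hez
            · exact hbT t ht'
      · right; left; exact rch_mono (hTsub _ _) hRch
      · right; right; left
        exact ⟨t, Finset.mem_insert_of_mem ht, ht2, htμ⟩
      · -- b in S and all reached
        by_cases hzS : g.1 ∈ S₀
        · right; left
          exact rch_mono (hTsub _ _) (hreach g.1 Relation.ReflTransGen.refl hzS)
        · obtain ⟨f, hf, hf1, hf2⟩ := rch_exits hκ hbS hzS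
          rw [Finset.mem_filter] at hf
          have hμe : μ g ≤ μ e := le_trans hf.2 (hmax f hf.1 hf1 hf2)
          right; right; right
          refine ⟨Finset.mem_insert_of_mem hbS, ?_⟩
          intro v hv hvS
          rcases Finset.mem_insert.mp hvS with rfl | hvS₀
          · have he1 : Rch (N.filter fun t => μ g ≤ μ t) e.1 g.1 := by
              refine Relation.ReflTransGen.head ?_ hv
              rw [Finset.mem_filter]
              exact ⟨he, hμe⟩
            refine Relation.ReflTransGen.tail
              (rch_mono (hTsub _ _) (hreach e.1 he1 h1)) ?_
            rw [Finset.mem_filter]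
            exact ⟨Finset.mem_insert_self _ _, hμe⟩
          · exact rch_mono (hTsub _ _) (hreach v hv hvS₀)
  intro f hf hf2 hfμ
  rcases inv with ⟨hbS, hbT⟩ | hRch | ⟨t, ht, ht2, htμ⟩ | ⟨hbS, hreach⟩
  · exact absurd hf2 (hbT f hf)
  · exact hRch
  · have : t = f := (prim_basic hrun).2.2 t ht f hf (by rw [ht2, hf2])
    subst this
    omega
  · refine hreach g.1 Relation.ReflTransGen.refl ?_
    refine rch_closed (S := S) ?_ (rch_mono (Finset.filter_subset _ _) hκ) hbS
    exact hcl
  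
end PrimLemmas

/-! ### Propagation along realized tree edges, and the main run invariant -/

section MainRun

variable {V : Type*} [Fintype V] {μ : V × V → ℤ} {E : Finset (V × V)}

/-- Propagation: reach via tree edges that are each realized in the diagram `D`
(either present or reverse-reachable) yields reach in `D`, provided the root has
no incoming edge. -/
lemma tree_propagate {D TT : Finset (V × V)} {r : V}
    (hdeg : ∀ e ∈ D, ∀ f ∈ D, e.2 = f.2 → e = f)
    (hroot : ∀ f ∈ D, f.2 ≠ r)
    (hTT : ∀ t ∈ TT, (t ∈ D ∨ Rch D t.2 t.1) ∧ t.2 ≠ r) :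
    ∀ u : V, Rch TT r u → Rch D r u := by
  intro u h
  induction h with
  | refl => exact Relation.ReflTransGen.refl
  | @tail p q hp hpq ih =>
    rcases (hTT (p, q) hpq).1 with hin | hrev
    · exact Relation.ReflTransGen.tail ih hin
    · rcases rch_comparable hdeg ih _ hrev with h' | h'
      · exact h'
      · exfalso
        have hqr : q ≠ r := (hTT (p, q) hpq).2
        obtain ⟨f, hf, hf2⟩ := rch_into h' hqr
        exact hroot f hf hf2

/-- Claim A: if `w` never receives an incoming edge in the river run `ov`, then
for every margin-graph edge into `w` there is a strong path from `w` to its tail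
inside the final river diagram. -/
lemma river_winner_reach {ov : List (V × V)} (hov : IsDescOrdering μ E ov) {w : V}
    (hwin : noIncoming (riverFold ov) w) :
    ∀ e ∈ E, e.2 = w → Rch ((riverFold ov).filter fun f => μ e ≤ μ f) w e.1 := by
  intro e heE he2
  obtain ⟨hnd, hmem, hpw⟩ := hov
  have heov : e ∈ ov := (hmem e).mpr heE
  obtain ⟨l₁, l₂, hsplit⟩ := List.append_of_mem heov
  have heR : e ∉ riverFold ov := fun h => hwin e h he2
  have hguard : RGuard (riverFold l₁) e := by
    by_contra hc
    exact heR ((mem_riverFold_iff_of_split hnd hsplit).mpr hc)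
  have hD₁sub : riverFold l₁ ⊆ riverFold ov := by
    rw [hsplit]; exact riverFold_mono_prefix _ _ _
  rcases hguard with ⟨f, hf, hf2⟩ | hr
  · exact absurd (he2 ▸ hf2) (hwin f (hD₁sub hf))
  · rw [reach_iff_rch] at hr
    rw [← he2]
    refine rch_mono ?_ hr
    intro f hf
    rw [Finset.mem_filter]
    exact ⟨hD₁sub hf, riverFold_prefix_margin hpw hsplit f hf⟩

/-- The invariant of the river run with the RSP ordering. -/
lemma main_invariant {o orsp : List (V × V)} (ho : IsDescOrdering μ E o)
    {T : Finset (V × V)} {w : V} (horsp : IsSetOrdering μ E T orsp)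
    (hT_N : ∀ t ∈ T, t ∈ semiRiverFold μ o)
    (hT_head : ∀ t ∈ T, t.2 ≠ w)
    (hT_uniq : ∀ t ∈ T, ∀ t' ∈ T, t.2 = t'.2 → t = t')
    (hSUB : ∀ f ∈ T, ∀ g ∈ semiRiverFold μ o, g.2 = f.2 → μ f < μ g →
      Rch (T.filter fun t => μ g ≤ μ t) g.2 g.1)
    (hdag : ∀ e ∈ E, e.2 = w → Rch (T.filter fun t => μ e ≤ μ t) w e.1) :
    ∀ n : ℕ, (∀ f ∈ riverFold (orsp.take n), f.2 ≠ w) ∧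
      (∀ t ∈ T, t ∈ orsp.take n →
        (t ∈ riverFold (orsp.take n) ∨ Rch (riverFold (orsp.take n)) t.2 t.1)) := by
  obtain ⟨hnd, hmem, hpw⟩ := horsp
  have hdesc : IsDescOrdering μ E orsp :=
    ⟨hnd, hmem, hpw.imp (fun h => h.1)⟩
  set N := semiRiverFold μ o with hNdef
  have hRN : riverFold orsp ⊆ N := by
    intro f hf
    exact riverFold_subset_semiRiverFold ho hdesc f hf
  intro n
  induction n using Nat.strong_induction_on with
  | _ n IH =>
  match n with
  | 0 => simp [riverFold]
  | Nat.succ m =>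
  obtain ⟨hJ1, hJ2⟩ := IH m (Nat.lt_succ_self m)
  cases hdm : orsp.drop m with
  | nil =>
    have hlen : orsp.length ≤ m := by
      have := List.drop_eq_nil_iff.mp hdm
      omega
    have htake : orsp.take (m + 1) = orsp.take m := by
      rw [List.take_of_length_le hlen, List.take_of_length_le (by omega)]
    rw [htake]
    exact ⟨hJ1, hJ2⟩
  | cons e rest =>
  have hsplit : orsp = orsp.take m ++ e :: rest := by
    conv_lhs => rw [← List.take_append_drop m orsp]
    rw [hdm]
  have htake : orsp.take (m + 1) = orsp.take m ++ [e] := by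
    rw [List.take_add, hdm]
    rfl
  set D := riverFold (orsp.take m) with hDdef
  have hstep : riverFold (orsp.take (m + 1)) = riverStep D e := by
    rw [htake, riverFold, List.foldl_append]
    rfl
  have heE : e ∈ E := (hmem e).mp (by rw [hsplit]; simp)
  have henotin : e ∉ orsp.take m := (split_facts hnd hsplit).1
  have hDsub : D ⊆ riverFold orsp := by
    rw [hsplit, hDdef]; exact riverFold_mono_prefix _ _ _
  have hDμ : ∀ f ∈ D, μ e ≤ μ f := fun f hf =>
    ((pairwise_split hpw hsplit).1 f (mem_riverFold_mem _ _ hf)).1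
  have hdeg : ∀ p ∈ D, ∀ q ∈ D, p.2 = q.2 → p = q := riverFold_indeg _
  -- Fact: if e.2 = w then the guard holds (the edge into w is rejected.)
  have hwcase : e.2 = w → RGuard D e := by
    intro he2
    right
    rw [he2, reach_iff_rch]
    have hκw := hdag e heE he2
    have hproc : ∀ t ∈ T, μ e ≤ μ t → t ∈ orsp.take m := by
      intro t htT hμt
      have htov : t ∈ orsp := (hmem t).mpr ((ho.2.1 t).mp (mem_semiRiverFold_mem _ _ (hT_N t htT)))
      rw [hsplit] at htov
      rcases List.mem_append.mp htov with h | h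
      · exact h
      · exfalso
        rcases List.mem_cons.mp h with rfl | h'
        · exact hT_head t htT he2
        · obtain ⟨hle, himp⟩ := (pairwise_split hpw hsplit).2 t h'
          have : μ e = μ t := le_antisymm hμt hle
          exact hT_head e (himp this htT) he2
    refine tree_propagate hdeg (fun f hf => hJ1 f hf) ?_ e.1 hκw
    intro t ht
    rw [Finset.mem_filter] at ht
    exact ⟨hJ2 t ht.1 (hproc t ht.1 ht.2), hT_head t ht.1⟩
  by_cases hg : RGuard D e
  · -- the edge is rejected
    have hD' : riverFold (orsp.take (m + 1)) = D := by rw [hstep, riverStep_eq, if_pos hg]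
    rw [hD']
    refine ⟨hJ1, ?_⟩
    intro t htT htm
    rw [htake] at htm
    rcases List.mem_append.mp htm with h | h
    · exact hJ2 t htT h
    · -- t = e is a tree edge whose processing was rejected
      rw [List.mem_singleton] at h
      subst h
      rcases hg with ⟨h, hhD, hh2⟩ | hr
      · -- R1 rejection of a tree edge: impossible
        exfalso
        have hhm : h ∈ orsp.take m := mem_riverFold_mem _ _ hhD
        have hμh : μ t < μ h := by
          obtain ⟨hle, himp⟩ := (pairwise_split hpw hsplit).1 h hhm
          rcases lt_or_eq_of_le hle with h' | h'
          · exact h'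
          · exfalso
            have hhT : h ∈ T := himp h'.symm htT
            have : h = t := hT_uniq h hhT t htT hh2
            subst this
            exact henotin hhm
        have hhN : h ∈ N := hRN (hDsub hhD)
        have hκT := hSUB t htT h hhN hh2 hμh
        -- where h was added
        have hhR : h ∈ riverFold orsp := hDsub hhD
        obtain ⟨l₁, l₂, hsplit'⟩ := List.append_of_mem ((hmem h).mpr ((hmem h).mp
          (mem_riverFold_mem _ _ ((by rw [hsplit]; exact riverFold_mono_prefix _ _ _ : D ⊆ riverFold orsp) hhD))))
        have hguard' : ¬ RGuard (riverFold l₁) h :=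
          (mem_riverFold_iff_of_split hnd hsplit').mp hhR
        rw [RGuard, not_or] at hguard'
        obtain ⟨hnoin, hnoreach⟩ := hguard'
        have hl₁take : orsp.take l₁.length = l₁ := by
          rw [hsplit']; exact List.take_left
        have hhl₁ : h ∉ l₁ := (split_facts hnd hsplit').1
        have hn₁ : l₁.length < m := by
          by_contra hc
          push_neg at hc
          have : orsp.take m = l₁.take m := by
            rw [hsplit', List.take_append,
              (by omega : m - l₁.length = 0)]
            simp
          rw [this] at hhm
          exact hhl₁ (List.mem_of_mem_take hhm)
        obtain ⟨hJ1', hJ2'⟩ := IH l₁.length (by omega)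
        rw [hl₁take] at hJ1' hJ2'
        have hproc' : ∀ t' ∈ T, μ h ≤ μ t' → t' ∈ l₁ := by
          intro t' ht'T hμt'
          have ht'ov : t' ∈ orsp := (hmem t').mpr
            ((ho.2.1 t').mp (mem_semiRiverFold_mem _ _ (hT_N t' ht'T)))
          rw [hsplit'] at ht'ov
          rcases List.mem_append.mp ht'ov with hh | hh
          · exact hh
          · exfalso
            rcases List.mem_cons.mp hh with rfl | hh'
            · -- h ∈ T : impossible since h would equal t
              have : t' = t := hT_uniq t' ht'T t htT hh2
              subst this
              exact henotin hhm
            · obtain ⟨hle, himp⟩ := (pairwise_split hpw hsplit').2 t' hh'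
              have heq : μ h = μ t' := le_antisymm hμt' hle
              have hhT : h ∈ T := himp heq ht'T
              have : h = t := hT_uniq h hhT t htT hh2
              subst this
              exact henotin hhm
        have hreach : Rch (riverFold l₁) h.2 h.1 := by
          refine tree_propagate (riverFold_indeg _) ?_ ?_ h.1 hκT
          · intro f hf hf2
            exact hnoin ⟨f, hf, hf2⟩
          · intro t' ht'
            rw [Finset.mem_filter] at ht'
            refine ⟨hJ2' t' ht'.1 (hproc' t' ht'.1 ht'.2), ?_⟩
            intro hcon
            have : t' = t := hT_uniq t' ht'.1 t htT (by rw [hcon, hh2])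
            subst this
            have : t' ∈ orsp.take m := by
              have h1 : orsp.take l₁.length = l₁ := hl₁take
              have := hproc' t' ht'.1 ht'.2
              rw [← h1] at this
              exact List.mem_of_mem_take (by
                have hmono : orsp.take l₁.length = (orsp.take m).take l₁.length := by
                  rw [List.take_take, min_eq_left (by omega)]
                rw [← hmono]; exact this)
            exact henotin this
        rw [← reach_iff_rch] at hreach
        exact hnoreach hreach
      · -- R2 rejection: reach recorded
        right
        rw [reach_iff_rch] at hr
        exact hr
  · -- the edge is added
    have he2 : e.2 ≠ w := fun hc => hg (hwcase hc)
    have hD' : riverFold (orsp.take (m + 1)) = insert e D := by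
      rw [hstep, riverStep_eq, if_neg hg]
    rw [hD']
    constructor
    · intro f hf
      rcases Finset.mem_insert.mp hf with rfl | hf'
      · exact he2
      · exact hJ1 f hf'
    · intro t htT htm
      rw [htake] at htm
      rcases List.mem_append.mp htm with h | h
      · rcases hJ2 t htT h with h' | h'
        · exact Or.inl (Finset.mem_insert_of_mem h')
        · exact Or.inr (rch_mono (Finset.subset_insert _ _) h')
      · rw [List.mem_singleton] at h
        subst h
        exact Or.inl (Finset.mem_insert_self _ _)

end MainRun

/-- For every preference profile `P` and every alternative `w`:
`w` is a River PUT winner of `P` if and only if `w` is a winner of River run with the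
ordering `σ(E(M(P)), E(T^RSP(w, sRV(P))))`, i.e. any descending linear ordering of the
margin-graph edges in which, among edges of equal margin, the edges of an output `T` of
directed Prim started at `w` on the semi-River diagram (computed with any descending
linear ordering `o`) come first. Consequently, the set of River PUT winners is exactly
the set of alternatives passing this check. -/
theorem put_winner_iff_wins_with_rsp_ordering
    {A : Type*} [Fintype A] {m : ℕ} (hm : 1 ≤ m) (hA : 2 ≤ Fintype.card A)
    (P : Profile A m) (w : A)
    (o : List (A × A)) (ho : IsDescOrdering (marginE P) (marginEdges P) o)
    (T : Finset (A × A))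
    (hT : IsPrimOutput (semiRiverFold (marginE P) o) (marginE P) w T)
    (orsp : List (A × A))
    (horsp : IsSetOrdering (marginE P) (marginEdges P) T orsp) :
    (∃ o' : List (A × A), IsDescOrdering (marginE P) (marginEdges P) o' ∧
      noIncoming (riverFold o') w) ↔ noIncoming (riverFold orsp) w := by
  classical
  obtain ⟨S, hrun, hcl⟩ := hT
  set μ := marginE P with hμdef
  set E := marginEdges P with hEdef
  set N := semiRiverFold μ o with hNdef
  have hbasic := prim_basic hrun
  have hT_N : ∀ t ∈ T, t ∈ N := fun t ht => (hbasic.2.1 t ht).1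
  have hT_head : ∀ t ∈ T, t.2 ≠ w := fun t ht => (hbasic.2.1 t ht).2.2.2
  have hT_uniq : ∀ t ∈ T, ∀ t' ∈ T, t.2 = t'.2 → t = t' := hbasic.2.2
  constructor
  · rintro ⟨o', ho', hwin⟩
    have hSUB : ∀ f ∈ T, ∀ g ∈ N, g.2 = f.2 → μ f < μ g →
        Rch (T.filter fun t => μ g ≤ μ t) g.2 g.1 := by
      intro f hf g hgN hg2 hμfg
      have hfN : f ∈ N := hT_N f hf
      have hnot : ¬ SR1 μ N f := ((mem_semiRiverFold_iff ho f).mp hfN).2.1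
      have hReach : Reach (N.filter fun t => μ g ≤ μ t) f.2 g.1 := by
        by_contra hc
        exact hnot ⟨g, Finset.mem_filter.mpr ⟨hgN, hμfg⟩, hg2, hc⟩
      have hκ : Rch (N.filter fun t => μ g ≤ μ t) g.2 g.1 := by
        rw [hg2]
        rw [reach_iff_rch] at hReach
        exact hReach
      exact prim_sub hrun hcl g hgN hκ f hf hg2.symm hμfg
    have hdag : ∀ e ∈ E, e.2 = w → Rch (T.filter fun t => μ e ≤ μ t) w e.1 := by
      intro e heE he2
      have h1 := river_winner_reach ho' hwin e heE he2
      have h2 : Rch (N.filter fun t => μ e ≤ μ t) w e.1 := by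
        refine rch_mono ?_ h1
        intro f hf
        rw [Finset.mem_filter] at hf ⊢
        exact ⟨riverFold_subset_semiRiverFold ho ho' f hf.1, hf.2⟩
      exact prim_reach hrun hcl (μ e) e.1 h2
    have hmain := (main_invariant ho horsp hT_N hT_head hT_uniq hSUB hdag orsp.length).1
    rw [List.take_length] at hmain
    exact hmain
  · intro h
    exact ⟨orsp, ⟨horsp.1, horsp.2.1, horsp.2.2.imp fun h' => h'.1⟩, h⟩
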